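/- For any category C, the target functor t : Tw(C)^op → C^op sending an arrow to its target is homotopy terminal: for every object j of C^op, the comma category (j ↓ t) has contractible nerve. -/

import Mathlib

/-!
STATEMENT 1: For any category `C`, the target functor `t : Tw(C)ᵒᵖ ⥤ Cᵒᵖ`
sending an arrow to its target is homotopy terminal: for every object `j` of
`Cᵒᵖ`, the comma category `(j ↓ t)` has contractible nerve.
-/

open CategoryTheory Simplicial CategoryTheory.Limits

universe v u

/-- The opposite of the twisted arrow category of `C`: objects are arrows of
`C`; a morphism from `(a → b)` to `(c → d)` is a pair `u : a → c`, `v : d → b`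
with `u ≫ (c → d) ≫ v = (a → b)`. -/
structure TwOp (C : Type u) [Category.{v} C] : Type max u v where
  left : C
  right : C
  hom : left ⟶ right

instance (C : Type u) [Category.{v} C] : Category (TwOp C) where
  Hom A B := { p : (A.left ⟶ B.left) × (B.right ⟶ A.right) //
    p.1 ≫ B.hom ≫ p.2 = A.hom }
  id A := ⟨(𝟙 _, 𝟙 _), by simp⟩
  comp f g := ⟨(f.val.1 ≫ g.val.1, g.val.2 ≫ f.val.2), by
    dsimp only
    slice_lhs 2 4 => rw [g.property]
    simpa using f.property⟩
  id_comp f := by apply Subtype.ext; simp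
  comp_id f := by apply Subtype.ext; simp
  assoc f g h := by apply Subtype.ext; simp

/-- The target functor `Tw(C)ᵒᵖ ⥤ Cᵒᵖ`, remembering the target of an arrow. -/
def TwOp.tgt (C : Type u) [Category.{v} C] : TwOp C ⥤ Cᵒᵖ where
  obj A := Opposite.op A.right
  map f := f.val.2.op

/-- The map of simplicial sets `X ⟶ Δ[1]` constant at the vertex `k`. -/
def vertexMap (X : SSet) (k : Fin 2) : X ⟶ Δ[1] where
  app m := TypeCat.ofHom fun _ => SSet.stdSimplex.const 1 k m

universe u_1

/-- An elementary simplicial homotopy between two maps of simplicial sets. -/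
def ElemHomotopy {X Y : SSet.{u_1}} (f g : X ⟶ Y) : Prop :=
  ∃ H : Limits.prod X Δ[1] ⟶ Y,
    Limits.prod.lift (𝟙 X) (vertexMap X 0) ≫ H = f ∧
    Limits.prod.lift (𝟙 X) (vertexMap X 1) ≫ H = g

/-- Simplicial homotopy: the equivalence relation generated by elementary
homotopies. -/
def SHomotopic {X Y : SSet} (f g : X ⟶ Y) : Prop :=
  Relation.EqvGen ElemHomotopy f g

/-- A simplicial set is contractible if it is simplicially homotopy equivalent
to the point `Δ[0]`. -/
def SSetContractible (S : SSet) : Prop :=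
  ∃ (p : S ⟶ Δ[0]) (s : Δ[0] ⟶ S),
    SHomotopic (p ≫ s) (𝟙 S) ∧ SHomotopic (s ≫ p) (𝟙 Δ[0])


/-! ### Auxiliary machinery: homotopies of nerves from natural transformations -/

section Cyl
variable {D : Type u} [Category.{v} D]

/-- Cylinder functor attached to a natural transformation. -/
def cylFun {F G : D ⥤ D} (α : F ⟶ G) : D × Fin 2 ⥤ D where
  obj p := match p with
    | (d, ⟨0, _⟩) => F.obj d
    | (d, ⟨1, _⟩) => G.obj d
  map {p q} f := match p, q, f with
    | (_, ⟨0, _⟩), (_, ⟨0, _⟩), f => F.map f.1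
    | (_, ⟨0, _⟩), (d', ⟨1, _⟩), f => F.map f.1 ≫ α.app d'
    | (_, ⟨1, _⟩), (_, ⟨1, _⟩), f => G.map f.1
    | (_, ⟨1, _⟩), (_, ⟨0, _⟩), f => ((Nat.not_succ_le_zero 0) f.2.down.down).elim
  map_id p := by
    obtain ⟨d, ⟨(_ | _ | n), h⟩⟩ := p
    · simp
    · simp
    · omega
  map_comp {p q r} f g := by
    obtain ⟨d, ⟨(_ | _ | n), hp⟩⟩ := p <;>
    obtain ⟨e, ⟨(_ | _ | n'), hq⟩⟩ := q <;>
    obtain ⟨c, ⟨(_ | _ | n''), hr⟩⟩ := r <;>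
    first
      | omega
      | (exact ((Nat.not_succ_le_zero 0) f.2.down.down).elim)
      | (exact ((Nat.not_succ_le_zero 0) g.2.down.down).elim)
      | (dsimp; simp [α.naturality])

/-- The functor `Fin (n+1) ⥤ Fin 2` attached to an `n`-simplex of `Δ[1]`. -/
def finTwoF {m : SimplexCategoryᵒᵖ} (f : Δ[1].obj m) :
    Fin (m.unop.len + 1) ⥤ Fin 2 :=
  f.down.toOrderHom.monotone.functor

def htyApp {F G : D ⥤ D} (α : F ⟶ G) (m : SimplexCategoryᵒᵖ)
    (σ : (nerve D).obj m) (f : Δ[1].obj m) : (nerve D).obj m :=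
  Functor.prod' σ (finTwoF f) ⋙ cylFun α

example {F G : D ⥤ D} (α : F ⟶ G) (m m' : SimplexCategoryᵒᵖ) (g : m ⟶ m')
    (σ : (nerve D).obj m) (f : Δ[1].obj m) :
    htyApp α m' ((nerve D).map g σ) (Δ[1].map g f) = (nerve D).map g (htyApp α m σ f) := rfl

example {F G : D ⥤ D} (α : F ⟶ G) (m : SimplexCategoryᵒᵖ) (σ : (nerve D).obj m) :
    htyApp α m σ (SSet.stdSimplex.const 1 0 m) = σ ⋙ F := rfl

example {F G : D ⥤ D} (α : F ⟶ G) (m : SimplexCategoryᵒᵖ) (σ : (nerve D).obj m) :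
    htyApp α m σ (SSet.stdSimplex.const 1 1 m) = σ ⋙ G := rfl

end Cyl

/-- The nerve of a functor, as a map of simplicial sets. -/
def nerveMap {D : Type u} [Category.{v} D] (F : D ⥤ D) : nerve D ⟶ nerve D where
  app _ := TypeCat.ofHom fun σ => σ ⋙ F
  naturality _ _ _ := rfl

section Htpy
variable {D : Type u} [Category.{v} D]

noncomputable def htyH {F G : D ⥤ D} (α : F ⟶ G) :
    Limits.prod (nerve D) Δ[1] ⟶ nerve D where
  app m := TypeCat.ofHom fun p => htyApp α m
      ((Limits.prod.fst : Limits.prod (nerve D) Δ[1] ⟶ _).app m p)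
      ((Limits.prod.snd : Limits.prod (nerve D) Δ[1] ⟶ _).app m p)
  naturality m m' g := by
    ext p
    have h1 := ConcreteCategory.congr_hom ((Limits.prod.fst :
      Limits.prod (nerve D) Δ[1] ⟶ nerve D).naturality g) p
    have h2 := ConcreteCategory.congr_hom ((Limits.prod.snd :
      Limits.prod (nerve D) Δ[1] ⟶ Δ[1]).naturality g) p
    dsimp at h1 h2 ⊢
    rw [h1, h2]
    rfl

lemma elemHomotopy_of_natTrans {F G : D ⥤ D} (α : F ⟶ G) :
    ElemHomotopy (_root_.nerveMap F) (_root_.nerveMap G) := by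
  refine ⟨htyH α, ?_, ?_⟩
  · ext m σ : 4
    have h1 := ConcreteCategory.congr_hom (NatTrans.congr_app
      (Limits.prod.lift_fst (𝟙 (nerve D)) (vertexMap (nerve D) 0)) m) σ
    have h2 := ConcreteCategory.congr_hom (NatTrans.congr_app
      (Limits.prod.lift_snd (𝟙 (nerve D)) (vertexMap (nerve D) 0)) m) σ
    rw [FunctorToTypes.comp] at h1 h2
    show htyApp α m _ _ = _
    erw [h1, h2]
    rfl
  · ext m σ : 4
    have h1 := ConcreteCategory.congr_hom (NatTrans.congr_app
      (Limits.prod.lift_fst (𝟙 (nerve D)) (vertexMap (nerve D) 1)) m) σ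
    have h2 := ConcreteCategory.congr_hom (NatTrans.congr_app
      (Limits.prod.lift_snd (𝟙 (nerve D)) (vertexMap (nerve D) 1)) m) σ
    rw [FunctorToTypes.comp] at h1 h2
    show htyApp α m _ _ = _
    erw [h1, h2]
    rfl

end Htpy

/-! ### The comma category `(j ↓ t)` and its contraction -/

section Comma
variable {C : Type u} [Category.{v} C] (j : Cᵒᵖ)

/-- The canonical object of `(j ↓ t)`. -/
def ZObj : StructuredArrow j (TwOp.tgt C) :=
  StructuredArrow.mk (Y := ({ left := j.unop, right := j.unop, hom := 𝟙 _ } : TwOp C)) (𝟙 j)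

lemma TwOp.comp_val {C : Type u} [Category.{v} C] {A B D : TwOp C}
    (f : A ⟶ B) (g : B ⟶ D) :
    (f ≫ g).val = (f.val.1 ≫ g.val.1, g.val.2 ≫ f.val.2) := rfl

lemma unop_w {A B : StructuredArrow j (TwOp.tgt C)} (m : A ⟶ B) :
    B.hom.unop = m.right.val.2 ≫ A.hom.unop := by
  have := StructuredArrow.w m
  rw [← this]
  rfl

lemma comp_hom_unop {A B : StructuredArrow j (TwOp.tgt C)} (m : A ⟶ B) :
    m.right.val.1 ≫ B.right.hom ≫ B.hom.unop = A.right.hom ≫ A.hom.unop := by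
  rw [unop_w j m]
  have h := reassoc_of% m.right.property
  exact h _

/-- The retraction functor `K` sending `(a → b, φ : b → x)` to `(a → x, 𝟙 x)`. -/
def KFun : StructuredArrow j (TwOp.tgt C) ⥤ StructuredArrow j (TwOp.tgt C) where
  obj A := StructuredArrow.mk
    (Y := ({ left := A.right.left, right := j.unop,
             hom := A.right.hom ≫ A.hom.unop } : TwOp C)) (𝟙 j)
  map {A B} m := StructuredArrow.homMk
    ⟨(m.right.val.1, 𝟙 _), by
      show m.right.val.1 ≫ (B.right.hom ≫ B.hom.unop) ≫ 𝟙 j.unop = _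
      rw [Category.comp_id]; exact comp_hom_unop j m⟩
    (by apply Quiver.Hom.unop_inj; simp [TwOp.tgt])
  map_id A := by
    apply StructuredArrow.hom_ext
    apply Subtype.ext
    rfl
  map_comp f g := by
    apply StructuredArrow.hom_ext
    apply Subtype.ext
    simp [TwOp.comp_val]

/-- Natural transformation from `K` to the identity. -/
def alphaNT : KFun j ⟶ 𝟭 (StructuredArrow j (TwOp.tgt C)) where
  app A := StructuredArrow.homMk
    ⟨(𝟙 A.right.left, A.hom.unop), by simp [KFun]; exact Category.id_comp _⟩
    (by apply Quiver.Hom.unop_inj; simp [TwOp.tgt, KFun]; rfl)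
  naturality {A B} m := by
    apply StructuredArrow.hom_ext
    apply Subtype.ext
    apply Prod.ext
    · simp [KFun, TwOp.comp_val]; exact (Category.comp_id _).trans (Category.id_comp _).symm
    · simp [KFun, TwOp.comp_val, unop_w j m]

/-- Natural transformation from `K` to the constant functor at `ZObj`. -/
def betaNT : KFun j ⟶ (Functor.const _).obj (ZObj j) where
  app A := StructuredArrow.homMk
    ⟨(A.right.hom ≫ A.hom.unop, 𝟙 _), by simp [KFun, ZObj]; exact Category.comp_id _⟩
    (by apply Quiver.Hom.unop_inj; simp [TwOp.tgt, KFun, ZObj]; rfl)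
  naturality {A B} m := by
    apply StructuredArrow.hom_ext
    apply Subtype.ext
    apply Prod.ext
    · simpa [KFun, ZObj, TwOp.comp_val] using comp_hom_unop j m
    · simp [KFun, ZObj, TwOp.comp_val]

end Comma

lemma delta0_eq {m : SimplexCategoryᵒᵖ} (a b : Δ[0].obj m) : a = b := by
  obtain ⟨a⟩ := a
  obtain ⟨b⟩ := b
  congr 1
  apply SimplexCategory.Hom.ext
  apply OrderHom.ext
  funext x
  exact @Subsingleton.elim (Fin 1) _ _ _

section Final
variable {C : Type u} [Category.{v} C] (j : Cᵒᵖ)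

/-- The projection to the point. -/
def pMap : nerve (StructuredArrow j (TwOp.tgt C)) ⟶ Δ[0] where
  app m := TypeCat.ofHom fun _ => SSet.stdSimplex.const 0 0 m
  naturality _ _ _ := by ext; exact delta0_eq _ _

/-- The inclusion of the canonical object. -/
def sMap : Δ[0] ⟶ nerve (StructuredArrow j (TwOp.tgt C)) where
  app _ := TypeCat.ofHom fun _ => (Functor.const _).obj (ZObj j)
  naturality _ _ _ := rfl

end Final

/-- The target functor is homotopy terminal: every comma category `(j ↓ t)`
has contractible nerve. -/
theorem target_functor_homotopy_terminal (C : Type u) [Category.{v} C]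
    (j : Cᵒᵖ) :
    SSetContractible (nerve (StructuredArrow j (TwOp.tgt C))) := by
  refine ⟨pMap j, sMap j, ?_, ?_⟩
  · have h1 : pMap j ≫ sMap j =
        _root_.nerveMap ((Functor.const _).obj (ZObj j)) := rfl
    have h2 : 𝟙 (nerve (StructuredArrow j (TwOp.tgt C))) =
        _root_.nerveMap (𝟭 _) := rfl
    rw [h1, h2]
    exact Relation.EqvGen.trans _ _ _
      (Relation.EqvGen.symm _ _
        (Relation.EqvGen.rel _ _ (elemHomotopy_of_natTrans (betaNT j))))
      (Relation.EqvGen.rel _ _ (elemHomotopy_of_natTrans (alphaNT j)))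
  · have h : sMap j ≫ pMap j = 𝟙 Δ[0] := by
      apply NatTrans.ext
      funext _
      ext x
      exact delta0_eq _ _
    rw [h]
    exact Relation.EqvGen.refl _
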